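/- Let T^(1) = T(ℓ_1, s_1), …, T^(L) = T(ℓ_L, s_L) with delay indices ℓ_1, …, ℓ_L ∈ {0,…,M−1} that are pairwise distinct, and arbitrary real Doppler exponents s_i. Then for every row index r ∈ {0,…,MN−1} and all i ≠ j: χ^{ij} := |[T^(i) T^(j)†]_{(r,r)}|² = 0 and κ^{ij} := |∑_{r'≠r} [T^(i) T^(j)†]_{(r,r')}|² = 1 (the claim of Remark 2, combining Lemmas 2 and 3). -/

import Mathlib

open Matrix

noncomputable section

/-- Entry of the `N`-point unitary DFT matrix, written with natural-number indices:
`(F_N)_{a,b} = (1/√N) exp(-2πi a b / N)`. -/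
def dftEntry (N a b : ℕ) : ℂ :=
  (((Real.sqrt N)⁻¹ : ℝ) : ℂ) *
    Complex.exp (-(2 * Real.pi * Complex.I) * (a : ℂ) * (b : ℂ) / (N : ℂ))

/-- The Kronecker product `F_N ⊗ I_M`, realised on `Fin (M*N)` via the
correspondence `u ↔ (u / M, u % M)` (index `u` encodes the pair
`(a,b) = (u / M, u % M)` as `u = a·M + b`). -/
def FkronI (M N : ℕ) : Matrix (Fin (M * N)) (Fin (M * N)) ℂ :=
  Matrix.of fun u v =>
    if (u : ℕ) % M = (v : ℕ) % M then dftEntry N ((u : ℕ) / M) ((v : ℕ) / M) else 0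

/-- The cyclic-shift permutation matrix `Π` of size `K`:
`Π_{u,v} = 1` iff `u ≡ v + 1 (mod K)`. -/
def cyclicShift (K : ℕ) : Matrix (Fin K) (Fin K) ℂ :=
  Matrix.of fun u v => if ((v : ℕ) + 1) % K = (u : ℕ) then 1 else 0

/-- The diagonal matrix `Δ^s` of size `K`, with `(Δ^s)_{j,j} = exp(2πi s j / K)`. -/
def deltaPow (K : ℕ) (s : ℝ) : Matrix (Fin K) (Fin K) ℂ :=
  Matrix.diagonal fun j => Complex.exp (2 * Real.pi * Complex.I * (s : ℂ) * ((j : ℕ) : ℂ) / (K : ℂ))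

/-- The OTFS delay–Doppler matrix `T(ℓ,s) = (F_N ⊗ I_M) Π^ℓ Δ^s (F_N^† ⊗ I_M)`. -/
def Tmat (M N : ℕ) (ℓ : ℕ) (s : ℝ) : Matrix (Fin (M * N)) (Fin (M * N)) ℂ :=
  FkronI M N * (cyclicShift (M * N)) ^ ℓ * deltaPow (M * N) s * (FkronI M N)ᴴ

lemma conj_dftEntry (N a b : ℕ) :
    (starRingEnd ℂ) (dftEntry N a b) =
      (((Real.sqrt N)⁻¹ : ℝ) : ℂ) *
        Complex.exp ((2 * Real.pi * Complex.I) * (a : ℂ) * (b : ℂ) / (N : ℂ)) := by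
  unfold dftEntry
  rw [_root_.map_mul, Complex.conj_ofReal, ← Complex.exp_conj]
  congr 1
  simp [map_div₀, map_ofNat]

lemma sqrt_inv_sq (N : ℕ) :
    ((((Real.sqrt N)⁻¹ : ℝ) : ℂ)) * (((Real.sqrt N)⁻¹ : ℝ) : ℂ) = ((N : ℂ))⁻¹ := by
  rw [← Complex.ofReal_mul, ← mul_inv, Real.mul_self_sqrt (Nat.cast_nonneg N)]
  simp

lemma exp_sum_int (n : ℕ) (hn : 0 < n) (m : ℤ) :
    ∑ a : Fin n, Complex.exp (2 * Real.pi * Complex.I * (m : ℂ) * (a : ℕ) / (n : ℂ)) =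
      if (n : ℤ) ∣ m then (n : ℂ) else 0 := by
  have hn' : (n : ℂ) ≠ 0 := Nat.cast_ne_zero.2 hn.ne'
  set ζ : ℂ := Complex.exp (2 * Real.pi * Complex.I * (m : ℂ) / (n : ℂ)) with hζ
  have hterm : ∀ a : ℕ, Complex.exp (2 * Real.pi * Complex.I * (m : ℂ) * (a : ℕ) / (n : ℂ)) = ζ ^ a := by
    intro a
    rw [hζ, ← Complex.exp_nat_mul]
    ring_nf
  have hζ1 : ζ = 1 ↔ (n : ℤ) ∣ m := by
    rw [hζ, Complex.exp_eq_one_iff]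
    constructor
    · rintro ⟨k, hk⟩
      refine ⟨k, ?_⟩
      have hpi : (2 * (Real.pi : ℂ) * Complex.I) ≠ 0 := by
        simp [Real.pi_ne_zero, Complex.I_ne_zero]
      have hmc : (m : ℂ) = (k : ℂ) * (n : ℂ) := by
        apply mul_left_cancel₀ hpi
        field_simp at hk
        linear_combination (2 * (Real.pi : ℂ) * Complex.I) * hk
      have : (m : ℤ) = k * n := by exact_mod_cast hmc
      rw [this]; ring
    · rintro ⟨k, hk⟩
      refine ⟨k, ?_⟩
      subst hk
      push_cast
      field_simp
  have hsum : ∑ a : Fin n, ζ ^ (a : ℕ) = if (n:ℤ) ∣ m then (n:ℂ) else 0 := by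
    rw [Fin.sum_univ_eq_sum_range]
    by_cases h : (n:ℤ) ∣ m
    · simp [h, (hζ1.2 h)]
    · rw [if_neg h, geom_sum_eq (fun h1 => h (hζ1.1 h1))]
      have : ζ ^ n = 1 := by
        rw [hζ, ← Complex.exp_nat_mul]
        have : (n:ℂ) * (2 * Real.pi * Complex.I * m / n) = m * (2 * Real.pi * Complex.I) := by
          field_simp
        rw [this, Complex.exp_int_mul_two_pi_mul_I]
      simp [this]
  rw [← hsum]
  exact Finset.sum_congr rfl fun a _ => hterm a

lemma dft_ortho (N : ℕ) (hN : 0 < N) (x y : ℕ) (hx : x < N) (hy : y < N) :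
    ∑ a : Fin N, (starRingEnd ℂ) (dftEntry N a x) * dftEntry N a y
      = if x = y then 1 else 0 := by
  have hN' : (N : ℂ) ≠ 0 := Nat.cast_ne_zero.2 hN.ne'
  have key : ∀ a : Fin N, (starRingEnd ℂ) (dftEntry N a x) * dftEntry N a y =
      ((N:ℂ))⁻¹ * Complex.exp (2*Real.pi*Complex.I*((((x:ℤ)-(y:ℤ)):ℤ) : ℂ)*((a:ℕ):ℂ)/(N:ℂ)) := by
    intro a
    rw [conj_dftEntry]
    unfold dftEntry
    rw [mul_mul_mul_comm, sqrt_inv_sq, ← Complex.exp_add]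
    congr 1
    push_cast
    field_simp
    ring
  rw [Finset.sum_congr rfl (fun a _ => key a), ← Finset.mul_sum, exp_sum_int N hN ((x:ℤ)-y)]
  have hdvd : ((N:ℤ) ∣ (x:ℤ) - y) ↔ x = y := by
    constructor
    · intro h
      rcases h with ⟨c, hc⟩
      have hx' : (x:ℤ) < N := by exact_mod_cast hx
      have hy' : (y:ℤ) < N := by exact_mod_cast hy
      have hc0 : c = 0 := by
        rcases lt_trichotomy c 0 with h1 | h1 | h1
        · nlinarith [Int.ofNat_nonneg x, Int.ofNat_nonneg y]
        · exact h1
        · nlinarith [Int.ofNat_nonneg x, Int.ofNat_nonneg y]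
      rw [hc0, mul_zero, sub_eq_zero] at hc
      exact_mod_cast hc
    · intro h; rw [h]; simp
  by_cases h : x = y
  · simp [h, hdvd.2 h, inv_mul_cancel₀ hN']
  · rw [if_neg (fun hd => h (hdvd.1 hd)), if_neg h, mul_zero]

lemma dft_col_sum (N : ℕ) (hN : 0 < N) (x : ℕ) (hx : x < N) :
    ∑ a : Fin N, (starRingEnd ℂ) (dftEntry N a x)
      = if x = 0 then (N : ℂ) * (((Real.sqrt N)⁻¹ : ℝ) : ℂ) else 0 := by
  have key : ∀ a : Fin N, (starRingEnd ℂ) (dftEntry N a x) =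
      (((Real.sqrt N)⁻¹ : ℝ) : ℂ) * Complex.exp (2*Real.pi*Complex.I*(((x:ℤ)):ℂ)*((a:ℕ):ℂ)/(N:ℂ)) := by
    intro a
    rw [conj_dftEntry]
    congr 1
    push_cast
    ring_nf
  rw [Finset.sum_congr rfl (fun a _ => key a), ← Finset.mul_sum, exp_sum_int N hN (x:ℤ)]
  have hdvd : ((N:ℤ) ∣ (x:ℤ)) ↔ x = 0 := by
    rw [Int.natCast_dvd_natCast]
    exact ⟨fun h => Nat.eq_zero_of_dvd_of_lt h hx, fun h => h ▸ dvd_zero N⟩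
  by_cases h : x = 0
  · simp [h, mul_comm]
  · rw [if_neg (fun hd => h (hdvd.1 hd)), if_neg h, mul_zero]

lemma shift_pow_apply (K : ℕ) (ℓ : ℕ) (u v : Fin K) :
    ((cyclicShift K) ^ ℓ) u v = if ((v : ℕ) + ℓ) % K = (u : ℕ) then 1 else 0 := by
  have hK : 0 < K := v.pos
  induction ℓ generalizing u v with
  | zero =>
    rw [pow_zero, Matrix.one_apply]
    rw [Nat.add_zero, Nat.mod_eq_of_lt v.isLt]
    simp [Fin.ext_iff, eq_comm]
  | succ n ih =>
    rw [pow_succ, Matrix.mul_apply]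
    have hlt : ((v : ℕ) + 1) % K < K := Nat.mod_lt _ hK
    rw [Finset.sum_eq_single (⟨((v : ℕ) + 1) % K, hlt⟩ : Fin K)]
    · rw [ih]
      show _ * (cyclicShift K) _ v = _
      unfold cyclicShift
      simp only [Matrix.of_apply]
      simp only [if_true, mul_one, Nat.mod_add_mod]
      have harg : (v:ℕ) + 1 + n = (v:ℕ) + (n + 1) := by omega
      rw [harg]
    · intro b _ hb
      unfold cyclicShift
      simp only [Matrix.of_apply]
      rw [if_neg, mul_zero]
      intro h
      exact hb (Fin.ext h.symm)
    · intro h; exact absurd (Finset.mem_univ _) h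

lemma mod_shift_iff (K ℓ : ℕ) (hℓ : ℓ ≤ K) (w v : ℕ) (hw : w < K) (hv : v < K) :
    (w + ℓ) % K = v ↔ w = (v + (K - ℓ)) % K := by
  have hK : 0 < K := lt_of_le_of_lt (Nat.zero_le w) hw
  constructor
  · intro h
    subst h
    rw [Nat.mod_add_mod]
    have h2 : w + ℓ + (K - ℓ) = w + K := by omega
    rw [h2, Nat.add_mod_right, Nat.mod_eq_of_lt hw]
  · intro h
    subst h
    rw [Nat.mod_add_mod]
    have h2 : v + (K - ℓ) + ℓ = v + K := by omega
    rw [h2, Nat.add_mod_right, Nat.mod_eq_of_lt hv]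

lemma B_apply (K : ℕ) (ℓ : ℕ) (s : ℝ) (u v : Fin K) :
    ((cyclicShift K) ^ ℓ * deltaPow K s) u v =
      if ((v : ℕ) + ℓ) % K = (u : ℕ) then
        Complex.exp (2 * Real.pi * Complex.I * (s : ℂ) * ((v : ℕ) : ℂ) / (K : ℂ)) else 0 := by
  unfold deltaPow
  rw [Matrix.mul_diagonal, shift_pow_apply, ite_mul, one_mul, zero_mul]

lemma C_apply (K : ℕ) (hK : 0 < K) (ℓi ℓj : ℕ) (hi : ℓi ≤ K) (hj : ℓj ≤ K) (si sj : ℝ)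
    (u v : Fin K) :
    ((cyclicShift K ^ ℓi * deltaPow K si) * (cyclicShift K ^ ℓj * deltaPow K sj)ᴴ) u v =
      if (((v : ℕ) + (K - ℓj)) % K + ℓi) % K = (u : ℕ) then
        Complex.exp (2 * Real.pi * Complex.I * ((si : ℂ) - (sj : ℂ)) *
          ((((v : ℕ) + (K - ℓj)) % K : ℕ) : ℂ) / (K : ℂ))
      else 0 := by
  rw [Matrix.mul_apply]
  set w0 : Fin K := ⟨((v : ℕ) + (K - ℓj)) % K, Nat.mod_lt _ hK⟩ with hw0
  rw [Finset.sum_eq_single w0]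
  · rw [Matrix.conjTranspose_apply, B_apply, B_apply]
    have hcond : ((w0 : ℕ) + ℓj) % K = (v : ℕ) :=
      (mod_shift_iff K ℓj hj w0 v w0.isLt v.isLt).2 rfl
    rw [if_pos hcond]
    by_cases h : ((w0 : ℕ) + ℓi) % K = (u : ℕ)
    · rw [if_pos h, if_pos h]
      rw [show (star (Complex.exp (2 * Real.pi * Complex.I * (sj:ℂ) * ((w0:ℕ):ℂ) / (K:ℂ))) : ℂ)
            = (starRingEnd ℂ) (Complex.exp (2 * Real.pi * Complex.I * (sj:ℂ) * ((w0:ℕ):ℂ) / (K:ℂ))) from rfl,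
          ← Complex.exp_conj, ← Complex.exp_add]
      congr 1
      have hK' : (K : ℂ) ≠ 0 := Nat.cast_ne_zero.2 hK.ne'
      simp only [map_div₀, _root_.map_mul, Complex.conj_I, Complex.conj_ofReal, map_ofNat,
        Complex.conj_natCast]
      field_simp
      ring
    · rw [if_neg h, if_neg h, zero_mul]
  · intro w _ hw
    rw [Matrix.conjTranspose_apply, B_apply (K) ℓj]
    rw [if_neg, star_zero, mul_zero]
    intro h
    exact hw (Fin.ext ((mod_shift_iff K ℓj hj w v w.isLt v.isLt).1 h))
  · intro h; exact absurd (Finset.mem_univ _) h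

lemma sum_MN (M N : ℕ) (f : Fin (M * N) → ℂ) :
    ∑ u : Fin (M * N), f u
      = ∑ a : Fin N, ∑ b : Fin M, f ((finCongr (Nat.mul_comm N M)) (finProdFinEquiv (a, b))) := by
  rw [← Equiv.sum_comp ((finProdFinEquiv.trans (finCongr (Nat.mul_comm N M)))) f,
    Fintype.sum_prod_type]
  rfl

lemma eval_val (M N : ℕ) (a : Fin N) (b : Fin M) :
    (((finCongr (Nat.mul_comm N M)) (finProdFinEquiv (a, b)) : Fin (M * N)) : ℕ)
      = (b : ℕ) + M * (a : ℕ) := by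
  simp [finProdFinEquiv_apply_val]

lemma eval_mod (M N : ℕ) (a : Fin N) (b : Fin M) :
    (((finCongr (Nat.mul_comm N M)) (finProdFinEquiv (a, b)) : Fin (M * N)) : ℕ) % M = b := by
  rw [eval_val, Nat.add_mul_mod_self_left, Nat.mod_eq_of_lt b.isLt]

lemma eval_div (M N : ℕ) (hM : 0 < M) (a : Fin N) (b : Fin M) :
    (((finCongr (Nat.mul_comm N M)) (finProdFinEquiv (a, b)) : Fin (M * N)) : ℕ) / M = a := by
  rw [eval_val, Nat.add_mul_div_left _ _ hM, Nat.div_eq_of_lt b.isLt, Nat.zero_add]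

lemma FkronI_unitary (M N : ℕ) (hM : 0 < M) (hN : 0 < N) :
    (FkronI M N)ᴴ * FkronI M N = 1 := by
  ext u v
  rw [Matrix.mul_apply]
  simp only [Matrix.conjTranspose_apply, FkronI, Matrix.of_apply]
  rw [sum_MN M N]
  have hbody : ∀ (a : Fin N) (b : Fin M),
      (starRingEnd ℂ) (if (b:ℕ) % M = (u : ℕ) % M then dftEntry N (a:ℕ) ((u:ℕ)/M) else 0) *
        (if (b:ℕ) % M = (v : ℕ) % M then dftEntry N (a:ℕ) ((v:ℕ)/M) else 0)
      = (if (b:ℕ) = (u : ℕ) % M ∧ (b:ℕ) = (v : ℕ) % M then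
          (starRingEnd ℂ) (dftEntry N (a:ℕ) ((u:ℕ)/M)) * dftEntry N (a:ℕ) ((v:ℕ)/M) else 0) := by
    intro a b
    have hb : (b:ℕ) % M = (b:ℕ) := Nat.mod_eq_of_lt b.isLt
    rw [hb]
    by_cases h1 : (b:ℕ) = (u:ℕ)%M
    · by_cases h2 : (b:ℕ) = (v:ℕ)%M
      · rw [if_pos h1, if_pos h2, if_pos ⟨h1, h2⟩]
      · rw [if_neg h2, mul_zero, if_neg (by tauto)]
    · rw [if_neg h1, map_zero, zero_mul, if_neg (by tauto)]
  have hstep : ∀ (a : Fin N) (b : Fin M),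
      (starRingEnd ℂ) (FkronI M N ((finCongr (Nat.mul_comm N M)) (finProdFinEquiv (a, b))) u) *
        FkronI M N ((finCongr (Nat.mul_comm N M)) (finProdFinEquiv (a, b))) v
      = (if (b:ℕ) = (u : ℕ) % M ∧ (b:ℕ) = (v : ℕ) % M then
          (starRingEnd ℂ) (dftEntry N (a:ℕ) ((u:ℕ)/M)) * dftEntry N (a:ℕ) ((v:ℕ)/M) else 0) := by
    intro a b
    simp only [FkronI, Matrix.of_apply, eval_mod, eval_div M N hM]
    rw [← hbody a b, Nat.mod_eq_of_lt b.isLt]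
  calc ∑ a : Fin N, ∑ b : Fin M,
        (starRingEnd ℂ) (FkronI M N ((finCongr (Nat.mul_comm N M)) (finProdFinEquiv (a, b))) u) *
          FkronI M N ((finCongr (Nat.mul_comm N M)) (finProdFinEquiv (a, b))) v
      = ∑ a : Fin N, ∑ b : Fin M,
        (if (b:ℕ) = (u : ℕ) % M ∧ (b:ℕ) = (v : ℕ) % M then
          (starRingEnd ℂ) (dftEntry N (a:ℕ) ((u:ℕ)/M)) * dftEntry N (a:ℕ) ((v:ℕ)/M) else 0) := by
        exact Finset.sum_congr rfl fun a _ => Finset.sum_congr rfl fun b _ => hstep a b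
    _ = (1 : Matrix (Fin (M*N)) (Fin (M*N)) ℂ) u v := by
        by_cases hmod : (u : ℕ) % M = (v : ℕ) % M
        · have hb0 : (u : ℕ) % M < M := Nat.mod_lt _ hM
          have hcollapse : ∀ a : Fin N, ∑ b : Fin M,
              (if (b:ℕ) = (u : ℕ) % M ∧ (b:ℕ) = (v : ℕ) % M then
                (starRingEnd ℂ) (dftEntry N (a:ℕ) ((u:ℕ)/M)) * dftEntry N (a:ℕ) ((v:ℕ)/M) else 0)
              = (starRingEnd ℂ) (dftEntry N (a:ℕ) ((u:ℕ)/M)) * dftEntry N (a:ℕ) ((v:ℕ)/M) := by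
            intro a
            rw [Finset.sum_eq_single (⟨(u:ℕ) % M, hb0⟩ : Fin M)]
            · rw [if_pos ⟨rfl, by rw [← hmod]⟩]
            · intro b _ hb
              rw [if_neg]
              rintro ⟨h1, -⟩
              exact hb (Fin.ext h1)
            · intro h; exact absurd (Finset.mem_univ _) h
          rw [Finset.sum_congr rfl fun a _ => hcollapse a]
          have hu : (u:ℕ)/M < N := (Nat.div_lt_iff_lt_mul hM).2 (u.isLt.trans_le (Nat.mul_comm M N).le)
          have hv : (v:ℕ)/M < N := (Nat.div_lt_iff_lt_mul hM).2 (v.isLt.trans_le (Nat.mul_comm M N).le)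
          rw [dft_ortho N hN _ _ hu hv, Matrix.one_apply]
          by_cases hdiv : (u:ℕ)/M = (v:ℕ)/M
          · have huv : u = v := by
              apply Fin.ext
              conv_lhs => rw [← Nat.div_add_mod (u:ℕ) M]
              rw [hdiv, hmod, Nat.div_add_mod]
            rw [if_pos hdiv, if_pos huv]
          · have huv : u ≠ v := by
              intro h; exact hdiv (by rw [h])
            rw [if_neg hdiv, if_neg huv]
        · have : ∀ (a : Fin N) (b : Fin M),
              (if (b:ℕ) = (u : ℕ) % M ∧ (b:ℕ) = (v : ℕ) % M then
                (starRingEnd ℂ) (dftEntry N (a:ℕ) ((u:ℕ)/M)) * dftEntry N (a:ℕ) ((v:ℕ)/M) else 0)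
              = 0 := by
            intro a b
            rw [if_neg]
            rintro ⟨h1, h2⟩
            exact hmod (h1 ▸ h2)
          simp only [this, Finset.sum_const_zero]
          rw [Matrix.one_apply, if_neg]
          intro h; exact hmod (by rw [h])

lemma FkronI_col_sum (M N : ℕ) (hM : 0 < M) (hN : 0 < N) (v : Fin (M * N)) :
    ∑ w : Fin (M * N), (starRingEnd ℂ) (FkronI M N w v)
      = if (v : ℕ) < M then (N : ℂ) * (((Real.sqrt N)⁻¹ : ℝ) : ℂ) else 0 := by
  rw [sum_MN M N]
  have hstep : ∀ (a : Fin N) (b : Fin M),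
      (starRingEnd ℂ) (FkronI M N ((finCongr (Nat.mul_comm N M)) (finProdFinEquiv (a, b))) v)
      = (if (b:ℕ) = (v : ℕ) % M then (starRingEnd ℂ) (dftEntry N (a:ℕ) ((v:ℕ)/M)) else 0) := by
    intro a b
    simp only [FkronI, Matrix.of_apply, eval_mod, eval_div M N hM]
    by_cases h : (b:ℕ) = (v:ℕ) % M <;> simp [h]
  rw [Finset.sum_congr rfl fun a _ => Finset.sum_congr rfl fun b _ => hstep a b]
  have hb0 : (v : ℕ) % M < M := Nat.mod_lt _ hM
  have hcollapse : ∀ a : Fin N, ∑ b : Fin M,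
      (if (b:ℕ) = (v : ℕ) % M then (starRingEnd ℂ) (dftEntry N (a:ℕ) ((v:ℕ)/M)) else 0)
      = (starRingEnd ℂ) (dftEntry N (a:ℕ) ((v:ℕ)/M)) := by
    intro a
    rw [Finset.sum_eq_single (⟨(v:ℕ) % M, hb0⟩ : Fin M)]
    · rw [if_pos rfl]
    · intro b _ hb
      rw [if_neg (fun h1 => hb (Fin.ext h1))]
    · intro h; exact absurd (Finset.mem_univ _) h
  rw [Finset.sum_congr rfl fun a _ => hcollapse a]
  have hv : (v:ℕ)/M < N := (Nat.div_lt_iff_lt_mul hM).2 (v.isLt.trans_le (Nat.mul_comm M N).le)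
  rw [dft_col_sum N hN _ hv]
  have : (v:ℕ)/M = 0 ↔ (v:ℕ) < M := Nat.div_eq_zero_iff.trans ⟨fun h => h.resolve_left hM.ne', Or.inr⟩
  by_cases h : (v:ℕ) < M
  · rw [if_pos (this.2 h), if_pos h]
  · rw [if_neg (fun h0 => h (this.1 h0)), if_neg h]

lemma Tprod_eq (M N : ℕ) (hM : 0 < M) (hN : 0 < N) (ℓ1 ℓ2 : ℕ) (s1 s2 : ℝ) :
    Tmat M N ℓ1 s1 * (Tmat M N ℓ2 s2)ᴴ
      = FkronI M N * ((cyclicShift (M*N) ^ ℓ1 * deltaPow (M*N) s1) *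
          (cyclicShift (M*N) ^ ℓ2 * deltaPow (M*N) s2)ᴴ) * (FkronI M N)ᴴ := by
  have hA := FkronI_unitary M N hM hN
  have cancel : ∀ X : Matrix (Fin (M*N)) (Fin (M*N)) ℂ,
      (FkronI M N)ᴴ * (FkronI M N * X) = X := fun X => by
    rw [← Matrix.mul_assoc, hA, Matrix.one_mul]
  unfold Tmat
  simp only [Matrix.conjTranspose_mul, Matrix.conjTranspose_conjTranspose, Matrix.mul_assoc]
  rw [cancel]

lemma E_apply (M N : ℕ) (hM : 0 < M) (hN : 0 < N) (ℓi ℓj : ℕ) (hi : ℓi < M) (hj : ℓj < M)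
    (si sj : ℝ) (hK : 0 < M * N) (r r' : Fin (M * N)) :
    (Tmat M N ℓi si * (Tmat M N ℓj sj)ᴴ) r r'
      = ∑ v : Fin (M*N),
          (FkronI M N r ⟨((((v:ℕ) + (M*N - ℓj)) % (M*N)) + ℓi) % (M*N), Nat.mod_lt _ hK⟩ *
            Complex.exp (2 * Real.pi * Complex.I * ((si : ℂ) - (sj : ℂ)) *
              (((((v:ℕ) + (M*N - ℓj)) % (M*N) : ℕ)) : ℂ) / ((M*N : ℕ) : ℂ))) *
          (starRingEnd ℂ) (FkronI M N r' v) := by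
  have hMK : M ≤ M * N := Nat.le_mul_of_pos_right M hN
  have hi' : ℓi ≤ M*N := le_of_lt (lt_of_lt_of_le hi hMK)
  have hj' : ℓj ≤ M*N := le_of_lt (lt_of_lt_of_le hj hMK)
  rw [Tprod_eq M N hM hN, Matrix.mul_apply]
  apply Finset.sum_congr rfl
  intro v _
  rw [Matrix.conjTranspose_apply]
  congr 1
  rw [Matrix.mul_apply]
  rw [Finset.sum_eq_single
    (⟨((((v:ℕ) + (M*N - ℓj)) % (M*N)) + ℓi) % (M*N), Nat.mod_lt _ hK⟩ : Fin (M*N))]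
  · rw [C_apply (M*N) hK ℓi ℓj hi' hj' si sj, if_pos rfl, mul_comm]
  · intro u _ hu
    rw [C_apply (M*N) hK ℓi ℓj hi' hj' si sj, if_neg, mul_zero]
    intro h
    exact hu (Fin.ext h.symm)
  · intro h; exact absurd (Finset.mem_univ _) h

lemma main_core (M N : ℕ) (hM : 0 < M) (hN : 0 < N) (ℓi ℓj : ℕ) (hi : ℓi < M) (hj : ℓj < M)
    (hij : ℓi ≠ ℓj) (si sj : ℝ) (r : Fin (M * N)) :
    (Tmat M N ℓi si * (Tmat M N ℓj sj)ᴴ) r r = 0 ∧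
    ‖∑ r' : Fin (M * N), (Tmat M N ℓi si * (Tmat M N ℓj sj)ᴴ) r r'‖ = 1 := by
  have hK : 0 < M * N := Nat.mul_pos hM hN
  have hMK : M ≤ M * N := Nat.le_mul_of_pos_right M hN
  have hMdvd : M ∣ M * N := Dvd.intro N rfl
  -- the mod-M value of the shifted index
  have hu0mod : ∀ v : Fin (M*N),
      (((((v:ℕ) + (M*N - ℓj)) % (M*N)) + ℓi) % (M*N)) % M
        = ((v:ℕ) + ((M*N - ℓj) + ℓi)) % M := by
    intro v
    rw [Nat.mod_mod_of_dvd _ hMdvd]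
    rw [Nat.add_mod (((v:ℕ) + (M*N - ℓj)) % (M*N)) ℓi M, Nat.mod_mod_of_dvd _ hMdvd,
      ← Nat.add_mod, Nat.add_assoc]
  have hDne : ((M*N - ℓj) + ℓi) % M ≠ 0 := by
    have e0 : M*N = M*(N-1) + M := by
      conv_lhs => rw [show N = (N-1)+1 from by omega]
      rw [Nat.mul_add, Nat.mul_one]
    have e1 : (M*N - ℓj) + ℓi = M*(N-1) + ((M - ℓj) + ℓi) := by omega
    rw [e1, Nat.mul_add_mod]
    intro h0
    obtain ⟨c, hc⟩ := Nat.dvd_of_mod_eq_zero h0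
    have hc2 : c < 2 := by
      by_contra hge
      push_neg at hge
      have : M*2 ≤ M*c := Nat.mul_le_mul_left M hge
      omega
    interval_cases c <;> omega
  -- diagonal entry vanishes
  have hdiag : (Tmat M N ℓi si * (Tmat M N ℓj sj)ᴴ) r r = 0 := by
    rw [E_apply M N hM hN ℓi ℓj hi hj si sj hK r r]
    apply Finset.sum_eq_zero
    intro v _
    by_cases hv : (r:ℕ) % M = (v:ℕ) % M
    · have hne : (r:ℕ) % M ≠
          ((⟨((((v:ℕ) + (M*N - ℓj)) % (M*N)) + ℓi) % (M*N), Nat.mod_lt _ hK⟩ : Fin (M*N)) : ℕ) % M := by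
        rw [hu0mod v]
        intro heq
        have h2 : Nat.ModEq M ((v:ℕ) + ((M*N - ℓj) + ℓi)) ((v:ℕ) + 0) := by
          show _ % M = _ % M
          rw [Nat.add_zero, ← hv]
          exact heq.symm
        have h3 : Nat.ModEq M ((M*N - ℓj) + ℓi) 0 := Nat.ModEq.add_left_cancel' (v:ℕ) h2
        have h4 : ((M*N - ℓj) + ℓi) % M = 0 := by
          have := h3
          rwa [Nat.ModEq, Nat.zero_mod] at this
        exact hDne h4
      have hz : FkronI M N r
          (⟨((((v:ℕ) + (M*N - ℓj)) % (M*N)) + ℓi) % (M*N), Nat.mod_lt _ hK⟩ : Fin (M*N)) = 0 := by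
        unfold FkronI
        simp only [Matrix.of_apply]
        rw [if_neg hne]
      rw [hz, zero_mul, zero_mul]
    · have hz : FkronI M N r v = 0 := by
        unfold FkronI
        simp only [Matrix.of_apply]
        rw [if_neg hv]
      rw [hz, map_zero, mul_zero]
  refine ⟨hdiag, ?_⟩
  -- the full row sum
  have hswap : ∑ r' : Fin (M*N), (Tmat M N ℓi si * (Tmat M N ℓj sj)ᴴ) r r'
      = ∑ v : Fin (M*N),
          (FkronI M N r ⟨((((v:ℕ) + (M*N - ℓj)) % (M*N)) + ℓi) % (M*N), Nat.mod_lt _ hK⟩ *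
            Complex.exp (2 * Real.pi * Complex.I * ((si : ℂ) - (sj : ℂ)) *
              (((((v:ℕ) + (M*N - ℓj)) % (M*N) : ℕ)) : ℂ) / ((M*N : ℕ) : ℂ))) *
          (if (v : ℕ) < M then (N : ℂ) * (((Real.sqrt N)⁻¹ : ℝ) : ℂ) else 0) := by
    rw [Finset.sum_congr rfl fun r' _ => E_apply M N hM hN ℓi ℓj hi hj si sj hK r r']
    rw [Finset.sum_comm]
    apply Finset.sum_congr rfl
    intro v _
    rw [← Finset.mul_sum, FkronI_col_sum M N hM hN v]
  set D := (M*N - ℓj) + ℓi with hD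
  have hDlt : D % M < M := Nat.mod_lt _ hM
  have hv0lt : ((r:ℕ) % M + (M - D % M)) % M < M := Nat.mod_lt _ hM
  set v0 : Fin (M*N) := ⟨((r:ℕ) % M + (M - D % M)) % M, lt_of_lt_of_le hv0lt hMK⟩ with hv0
  have hv0key : (((v0:ℕ)) + D) % M = (r:ℕ) % M := by
    rw [Nat.add_mod ((v0:ℕ)) D M]
    have hval : (v0:ℕ) % M = (v0:ℕ) := Nat.mod_eq_of_lt hv0lt
    rw [hval]
    show (((r:ℕ) % M + (M - D % M)) % M + D % M) % M = (r:ℕ) % M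
    rw [Nat.mod_add_mod]
    have harg : (r:ℕ) % M + (M - D % M) + D % M = (r:ℕ) % M + M := by omega
    rw [harg, Nat.add_mod_right, Nat.mod_eq_of_lt (Nat.mod_lt _ hM)]
  have hcollapse : ∑ v : Fin (M*N),
          (FkronI M N r ⟨((((v:ℕ) + (M*N - ℓj)) % (M*N)) + ℓi) % (M*N), Nat.mod_lt _ hK⟩ *
            Complex.exp (2 * Real.pi * Complex.I * ((si : ℂ) - (sj : ℂ)) *
              (((((v:ℕ) + (M*N - ℓj)) % (M*N) : ℕ)) : ℂ) / ((M*N : ℕ) : ℂ))) *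
          (if (v : ℕ) < M then (N : ℂ) * (((Real.sqrt N)⁻¹ : ℝ) : ℂ) else 0)
      = (FkronI M N r ⟨((((v0:ℕ) + (M*N - ℓj)) % (M*N)) + ℓi) % (M*N), Nat.mod_lt _ hK⟩ *
            Complex.exp (2 * Real.pi * Complex.I * ((si : ℂ) - (sj : ℂ)) *
              (((((v0:ℕ) + (M*N - ℓj)) % (M*N) : ℕ)) : ℂ) / ((M*N : ℕ) : ℂ))) *
          ((N : ℂ) * (((Real.sqrt N)⁻¹ : ℝ) : ℂ)) := by
    rw [Finset.sum_eq_single v0]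
    · rw [if_pos (show ((v0:ℕ)) < M from hv0lt)]
    · intro v _ hvne
      by_cases hvM : (v:ℕ) < M
      · have hne : (r:ℕ) % M ≠
            ((⟨((((v:ℕ) + (M*N - ℓj)) % (M*N)) + ℓi) % (M*N), Nat.mod_lt _ hK⟩ : Fin (M*N)) : ℕ) % M := by
          rw [hu0mod v]
          intro heq
          have h2 : Nat.ModEq M ((v:ℕ) + D) ((v0:ℕ) + D) := by
            show _ % M = _ % M
            rw [← heq, hv0key]
          have h3 : Nat.ModEq M (v:ℕ) ((v0:ℕ)) := Nat.ModEq.add_right_cancel' D h2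
          have h4 : (v:ℕ) = (v0:ℕ) := by
            have := h3
            rwa [Nat.ModEq, Nat.mod_eq_of_lt hvM, Nat.mod_eq_of_lt hv0lt] at this
          exact hvne (Fin.ext h4)
        have hz : FkronI M N r
            (⟨((((v:ℕ) + (M*N - ℓj)) % (M*N)) + ℓi) % (M*N), Nat.mod_lt _ hK⟩ : Fin (M*N)) = 0 := by
          unfold FkronI
          simp only [Matrix.of_apply]
          rw [if_neg hne]
        rw [hz, zero_mul, zero_mul]
      · rw [if_neg hvM, mul_zero]
    · intro h; exact absurd (Finset.mem_univ _) h
  rw [hswap, hcollapse]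
  -- now compute the absolute value
  have hentry : FkronI M N r
      ⟨((((v0:ℕ) + (M*N - ℓj)) % (M*N)) + ℓi) % (M*N), Nat.mod_lt _ hK⟩
      = dftEntry N ((r:ℕ)/M)
          ((((((v0:ℕ) + (M*N - ℓj)) % (M*N)) + ℓi) % (M*N)) / M) := by
    unfold FkronI
    simp only [Matrix.of_apply]
    rw [if_pos]
    rw [hu0mod v0]
    exact hv0key.symm
  rw [hentry]
  have habs1 : ∀ a b : ℕ, ‖dftEntry N a b‖ = (Real.sqrt N)⁻¹ := by
    intro a b
    unfold dftEntry
    rw [norm_mul, Complex.norm_real, Real.norm_eq_abs,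
      abs_of_nonneg (inv_nonneg.2 (Real.sqrt_nonneg _))]
    have harg : -(2 * Real.pi * Complex.I) * (a:ℂ) * (b:ℂ) / (N:ℂ)
        = ((-(2 * Real.pi * a * b / N) : ℝ) : ℂ) * Complex.I := by
      push_cast; ring
    rw [harg, Complex.norm_exp_ofReal_mul_I, mul_one]
  have habs2 : ‖Complex.exp (2 * Real.pi * Complex.I * ((si : ℂ) - (sj : ℂ)) *
      (((((v0:ℕ) + (M*N - ℓj)) % (M*N) : ℕ)) : ℂ) / ((M*N : ℕ) : ℂ))‖ = 1 := by
    have harg : 2 * Real.pi * Complex.I * ((si : ℂ) - (sj : ℂ)) *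
        (((((v0:ℕ) + (M*N - ℓj)) % (M*N) : ℕ)) : ℂ) / ((M*N : ℕ) : ℂ)
        = ((2 * Real.pi * (si - sj) * ((((v0:ℕ) + (M*N - ℓj)) % (M*N) : ℕ)) / ((M*N : ℕ)) : ℝ) : ℂ)
            * Complex.I := by
      push_cast; ring
    rw [harg, Complex.norm_exp_ofReal_mul_I]
  rw [norm_mul, norm_mul, norm_mul, habs1, habs2, Complex.norm_natCast, Complex.norm_real, Real.norm_eq_abs,
    abs_of_nonneg (inv_nonneg.2 (Real.sqrt_nonneg _)), mul_one]
  rw [mul_comm (N:ℝ) ((Real.sqrt N)⁻¹), ← mul_assoc, ← mul_inv,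
    Real.mul_self_sqrt (Nat.cast_nonneg N), inv_mul_cancel₀ (Nat.cast_ne_zero.2 hN.ne')]


open Finset in
/-- **Remark 2** (combining Lemmas 2 and 3). If the delay indices `ℓ₁,…,ℓ_L ∈ {0,…,M-1}`
are pairwise distinct, then for every row index `r` and all `i ≠ j`:
`χ^{ij} = |[T^(i) T^(j)†]_{(r,r)}|² = 0` and
`κ^{ij} = |∑_{r'≠r} [T^(i) T^(j)†]_{(r,r')}|² = 1`. -/
theorem chi_eq_zero_and_kappa_eq_one (M N : ℕ) (hM : 0 < M) (hN : 0 < N)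
    (L : ℕ) (ℓ : Fin L → ℕ) (hℓ : ∀ i, ℓ i < M)
    (hdist : ∀ i j : Fin L, i ≠ j → ℓ i ≠ ℓ j) (s : Fin L → ℝ) :
    ∀ (r : Fin (M * N)) (i j : Fin L), i ≠ j →
      ‖(Tmat M N (ℓ i) (s i) * (Tmat M N (ℓ j) (s j))ᴴ) r r‖ ^ 2 = 0 ∧
      ‖∑ r' ∈ Finset.univ \ {r},
        (Tmat M N (ℓ i) (s i) * (Tmat M N (ℓ j) (s j))ᴴ) r r'‖ ^ 2 = 1 := by
  intro r i j hij
  obtain ⟨h0, h1⟩ := main_core M N hM hN (ℓ i) (ℓ j) (hℓ i) (hℓ j) (hdist i j hij) (s i) (s j) r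
  constructor
  · rw [h0, norm_zero]
    norm_num
  · have hsub : ∑ r' ∈ Finset.univ \ {r},
        (Tmat M N (ℓ i) (s i) * (Tmat M N (ℓ j) (s j))ᴴ) r r'
        = ∑ r' : Fin (M * N), (Tmat M N (ℓ i) (s i) * (Tmat M N (ℓ j) (s j))ᴴ) r r' := by
      rw [Finset.sum_sdiff_eq_sub (Finset.subset_univ {r}), Finset.sum_singleton, h0, sub_zero]
    rw [hsub, h1, one_pow]

end
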